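/- Let c, h, k, t be integers with c ≠ 0, k > 0, t > 0. Let d(x) = c·x^t + h and let g be the constant function g(x) = k/4. Let n, m be positive integers with n ≡ m (mod 2), let a > 0, and let w : ℝ → ℝ be a continuous function with w(x) > 0 for all x ∈ [−a, a]. Then ∫_{−a}^{a} 𝓕ₙ(x) · 𝓕ₘ(x) · w(x) dx > 0; in particular this integral is nonzero. -/
import Mathlib

/-- Generalized Fibonacci polynomials of Fibonacci type:
`𝓕₀ = 0`, `𝓕₁ = 1`, `𝓕ₙ = d·𝓕ₙ₋₁ + g·𝓕ₙ₋₂`. -/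
noncomputable def GFPF (d g : ℝ → ℝ) : ℕ → ℝ → ℝ
  | 0 => fun _ => 0
  | 1 => fun _ => 1
  | n + 2 => fun x => d x * GFPF d g (n + 1) x + g x * GFPF d g n x

/-- The polynomial `d(x) = c·x^t + h`. -/
noncomputable def dFun (c h t : ℤ) : ℝ → ℝ := fun x => (c : ℝ) * x ^ t + (h : ℝ)

lemma gfpf_nonneg (d g : ℝ → ℝ) (x : ℝ) (hd : 0 ≤ d x) (hg : 0 ≤ g x) :
    ∀ n, 0 ≤ GFPF d g n x
  | 0 => by simp [GFPF]
  | 1 => by simp [GFPF]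
  | (n + 2) => by
      have h1 := gfpf_nonneg d g x hd hg (n + 1)
      have h2 := gfpf_nonneg d g x hd hg n
      simp only [GFPF]
      positivity

lemma gfpf_pos (d g : ℝ → ℝ) (x : ℝ) (hd : 0 < d x) (hg : 0 ≤ g x) :
    ∀ n, 0 < n → 0 < GFPF d g n x
  | 1, _ => by simp [GFPF]
  | (n + 2), _ => by
      have h1 := gfpf_pos d g x hd hg (n + 1) n.succ_pos
      have h2 := gfpf_nonneg d g x hd.le hg n
      simp only [GFPF]
      have : 0 < d x * GFPF d g (n + 1) x := mul_pos hd h1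
      nlinarith

lemma gfpf_neg_d (d g : ℝ → ℝ) : ∀ (n : ℕ) (x : ℝ),
    GFPF (fun y => -d y) g n x = (-1 : ℝ) ^ (n + 1) * GFPF d g n x
  | 0, x => by simp [GFPF]
  | 1, x => by simp [GFPF]
  | (n + 2), x => by
      have h1 := gfpf_neg_d d g (n + 1) x
      have h2 := gfpf_neg_d d g n x
      simp only [GFPF]
      rw [h1, h2]
      simp [pow_succ]
      ring

lemma gfpf_continuous (d g : ℝ → ℝ) (hd : Continuous d) (hg : Continuous g) :
    ∀ n, Continuous (GFPF d g n)
  | 0 => by simpa [GFPF] using continuous_const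
  | 1 => by simpa [GFPF] using continuous_const
  | (n + 2) => by
      have h1 := gfpf_continuous d g hd hg (n + 1)
      have h2 := gfpf_continuous d g hd hg n
      simp only [GFPF]
      fun_prop

lemma parity_even {n m : ℕ} (hnm : n % 2 = m % 2) : Even (n + 1 + (m + 1)) := by
  rw [Nat.even_iff]; omega

lemma gfpf_prod_nonneg (d g : ℝ → ℝ) (x : ℝ) (hg : 0 ≤ g x) {n m : ℕ}
    (hnm : n % 2 = m % 2) : 0 ≤ GFPF d g n x * GFPF d g m x := by
  rcases le_or_gt 0 (d x) with hd | hd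
  · exact mul_nonneg (gfpf_nonneg d g x hd hg n) (gfpf_nonneg d g x hd hg m)
  · have hd' : 0 ≤ (fun y => -d y) x := by simpa using hd.le
    have e1 := gfpf_neg_d d g n x
    have e2 := gfpf_neg_d d g m x
    have p1 := gfpf_nonneg (fun y => -d y) g x hd' hg n
    have p2 := gfpf_nonneg (fun y => -d y) g x hd' hg m
    rw [e1] at p1; rw [e2] at p2
    have key : ((-1 : ℝ) ^ (n + 1) * GFPF d g n x) * ((-1 : ℝ) ^ (m + 1) * GFPF d g m x)
        = GFPF d g n x * GFPF d g m x := by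
      have h1 : (-1 : ℝ) ^ (n + 1) * (-1 : ℝ) ^ (m + 1) = 1 := by
        rw [← pow_add]; exact (parity_even hnm).neg_one_pow
      rw [mul_mul_mul_comm, h1, one_mul]
    rw [← key]; exact mul_nonneg p1 p2

lemma gfpf_prod_pos (d g : ℝ → ℝ) (x : ℝ) (hg : 0 ≤ g x) {n m : ℕ}
    (hn : 0 < n) (hm : 0 < m) (hnm : n % 2 = m % 2) (hd : d x ≠ 0) :
    0 < GFPF d g n x * GFPF d g m x := by
  rcases hd.lt_or_gt with hd | hd
  · have hd' : 0 < (fun y => -d y) x := by simpa using hd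
    have e1 := gfpf_neg_d d g n x
    have e2 := gfpf_neg_d d g m x
    have p1 := gfpf_pos (fun y => -d y) g x hd' hg n hn
    have p2 := gfpf_pos (fun y => -d y) g x hd' hg m hm
    rw [e1] at p1; rw [e2] at p2
    have key : ((-1 : ℝ) ^ (n + 1) * GFPF d g n x) * ((-1 : ℝ) ^ (m + 1) * GFPF d g m x)
        = GFPF d g n x * GFPF d g m x := by
      have h1 : (-1 : ℝ) ^ (n + 1) * (-1 : ℝ) ^ (m + 1) = 1 := by
        rw [← pow_add]; exact (parity_even hnm).neg_one_pow
      rw [mul_mul_mul_comm, h1, one_mul]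
    rw [← key]; exact mul_pos p1 p2
  · exact mul_pos (gfpf_pos d g x hd hg n hn) (gfpf_pos d g x hd hg m hm)

theorem gfpf_not_orthogonal_same_parity (c h k t : ℤ)
    (hc : c ≠ 0) (hk : 0 < k) (ht : 0 < t)
    (n m : ℕ) (hn : 0 < n) (hm : 0 < m) (hnm : n % 2 = m % 2)
    (a : ℝ) (ha : 0 < a)
    (w : ℝ → ℝ) (hw : Continuous w) (hwpos : ∀ x ∈ Set.Icc (-a) a, 0 < w x) :
    (0 < ∫ x in (-a)..a,
        GFPF (dFun c h t) (fun _ => (k : ℝ) / 4) n x *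
          GFPF (dFun c h t) (fun _ => (k : ℝ) / 4) m x * w x) ∧
    (∫ x in (-a)..a,
        GFPF (dFun c h t) (fun _ => (k : ℝ) / 4) n x *
          GFPF (dFun c h t) (fun _ => (k : ℝ) / 4) m x * w x) ≠ 0 := by
  set D := dFun c h t with hD
  set G : ℝ → ℝ := fun _ => (k : ℝ) / 4 with hG
  set f : ℝ → ℝ := fun x => GFPF D G n x * GFPF D G m x * w x with hf
  have hgx : ∀ x : ℝ, 0 ≤ G x := fun x => by
    have : (0:ℝ) < (k:ℝ) := by exact_mod_cast hk
    simp only [hG]; linarith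
  -- rewrite d with natural exponent
  have htn : ((t.toNat : ℤ)) = t := Int.toNat_of_nonneg ht.le
  have hDeq : D = fun x : ℝ => (c : ℝ) * x ^ t.toNat + (h : ℝ) := by
    funext x
    simp only [hD, dFun]
    conv_lhs => rw [← htn]
    rw [zpow_natCast]
  have hDcont : Continuous D := by rw [hDeq]; fun_prop
  have hGcont : Continuous G := continuous_const
  have hfc : Continuous f := by
    apply Continuous.mul _ hw
    exact (gfpf_continuous D G hDcont hGcont n).mul (gfpf_continuous D G hDcont hGcont m)
  have hfi : IntervalIntegrable f MeasureTheory.volume (-a) a := hfc.intervalIntegrable _ _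
  -- find a point x0 in (-a, a) with D x0 ≠ 0
  have htne : t.toNat ≠ 0 := by omega
  have hx0 : ∃ x0 : ℝ, x0 ∈ Set.Ioo (-a) a ∧ D x0 ≠ 0 := by
    by_cases h1 : D (a / 2) = 0
    · refine ⟨a / 3, ⟨by linarith, by linarith⟩, ?_⟩
      intro h2
      rw [hDeq] at h1 h2
      have hpw : (a / 3 : ℝ) ^ t.toNat < (a / 2) ^ t.toNat :=
        pow_lt_pow_left₀ (by linarith) (by linarith) htne
      have hcne : (c : ℝ) ≠ 0 := Int.cast_ne_zero.mpr hc
      have : (c : ℝ) * (a / 2) ^ t.toNat = (c : ℝ) * (a / 3) ^ t.toNat := by linarith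
      have := mul_left_cancel₀ hcne this
      nlinarith
    · exact ⟨a / 2, ⟨by linarith, by linarith⟩, h1⟩
  obtain ⟨x0, hx0mem, hx0ne⟩ := hx0
  have hx0Icc : x0 ∈ Set.Icc (-a) a := Set.mem_Icc.mpr ⟨hx0mem.1.le, hx0mem.2.le⟩
  have hfx0 : 0 < f x0 :=
    mul_pos (gfpf_prod_pos D G x0 (hgx x0) hn hm hnm hx0ne) (hwpos x0 hx0Icc)
  -- nonnegativity on uIoc
  have hnonneg : 0 ≤ᵐ[MeasureTheory.volume.restrict (Set.uIoc (-a) a)] f := by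
    rw [Set.uIoc_of_le (by linarith : (-a : ℝ) ≤ a)]
    refine (MeasureTheory.ae_restrict_iff' measurableSet_Ioc).mpr ?_
    filter_upwards with x hx
    have hxIcc : x ∈ Set.Icc (-a) a := Set.mem_Icc.mpr ⟨hx.1.le, hx.2⟩
    exact mul_nonneg (gfpf_prod_nonneg D G x (hgx x) hnm) (hwpos x hxIcc).le
  have hpos : 0 < ∫ x in (-a)..a, f x := by
    rw [intervalIntegral.integral_pos_iff_support_of_nonneg_ae' hnonneg hfi]
    refine ⟨by linarith, ?_⟩
    have hU : IsOpen (f ⁻¹' Set.Ioi 0 ∩ Set.Ioo (-a) a) :=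
      (isOpen_Ioi.preimage hfc).inter isOpen_Ioo
    have hne : (f ⁻¹' Set.Ioi 0 ∩ Set.Ioo (-a) a).Nonempty := ⟨x0, hfx0, hx0mem⟩
    have hsub : f ⁻¹' Set.Ioi 0 ∩ Set.Ioo (-a) a ⊆ Function.support f ∩ Set.Ioc (-a) a := by
      rintro x ⟨hx1, hx2⟩
      exact ⟨ne_of_gt hx1, hx2.1, hx2.2.le⟩
    calc (0 : ENNReal) < MeasureTheory.volume (f ⁻¹' Set.Ioi 0 ∩ Set.Ioo (-a) a) :=
          hU.measure_pos _ hne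
      _ ≤ _ := MeasureTheory.measure_mono hsub
  exact ⟨hpos, hpos.ne'⟩
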